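/- arXiv:1807.04705 — 2 statements merged into one kernel-verified Lean document; each statement's English description precedes it below -/
import Mathlib

section
/- Let y ∈ ℝ^d be a vector with nonnegative entries and ‖y‖₂ = 1, and let 1 ≤ m ≤ d. Then the maximum of ⟨y, z⟩ over vectors z ∈ ℝ^d with nonnegative entries, ‖z‖₂ = 1, and ‖z‖_∞ ≤ 1/√m equals (1/√m)‖y‖_{[m]}, i.e., it agrees with the maximum taken without the nonnegativity restriction on z. -/
open Matrix BigOperators Complex ComplexOrder

noncomputable section

variable {ι : Type*} [Fintype ι] [DecidableEq ι]

/-- The matrix square root of a PSD matrix, as defined in Mathlib (Dec 2024). -/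
def Matrix.PosSemidef.sqrt {A : Matrix ι ι ℂ} (hA : A.PosSemidef) : Matrix ι ι ℂ :=
  hA.1.eigenvectorUnitary.1 * diagonal ((↑) ∘ (√·) ∘ hA.1.eigenvalues) *
    (star hA.1.eigenvectorUnitary : Matrix ι ι ℂ)

/-- A density matrix: positive semidefinite with unit trace. -/
def IsDensityMatrix (ρ : Matrix ι ι ℂ) : Prop := ρ.PosSemidef ∧ ρ.trace = 1

/-- The rank-one projector |ψ⟩⟨ψ| associated to a vector. -/
def pureState (ψ : ι → ℂ) : Matrix ι ι ℂ := Matrix.of fun i j => ψ i * (starRingEnd ℂ) (ψ j)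

/-- The trace norm ‖A‖₁ = Tr √(AᴴA). -/
def traceNorm (A : Matrix ι ι ℂ) : ℝ :=
  ((Matrix.posSemidef_conjTranspose_mul_self A).sqrt.trace).re

open Classical in
/-- Matrix square root (junk value 0 on matrices that are not PSD). -/
def matSqrt (A : Matrix ι ι ℂ) : Matrix ι ι ℂ := if h : A.PosSemidef then h.sqrt else 0

/-- Fidelity F(ρ,σ) = ‖√ρ√σ‖₁². -/
def fidelity (ρ σ : Matrix ι ι ℂ) : ℝ := (traceNorm (matSqrt ρ * matSqrt σ))^2

/-- The dephasing map Δ, keeping only the diagonal. -/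
def deph (ρ : Matrix ι ι ℂ) : Matrix ι ι ℂ := Matrix.diagonal (fun i => ρ i i)

/-- The m-distillation norm ‖ψ‖_{[m]} = min_x (‖ψ-x‖₁ + √m ‖x‖₂). -/
def distNorm (m : ℕ) (ψ : ι → ℂ) : ℝ :=
  ⨅ x : ι → ℂ, ((∑ i, ‖ψ i - x i‖) +
    Real.sqrt m * Real.sqrt (∑ i, (‖x i‖)^2))

/-- M_m: convex combinations of pure states with ℓ∞ norm at most 1/√m. -/
def Mset (m : ℕ) : Set (Matrix ι ι ℂ) :=
  {ω | ∃ (n : ℕ) (p : Fin n → ℝ) (ψ : Fin n → ι → ℂ),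
    (∀ i, 0 ≤ p i) ∧ (∑ i, p i = 1) ∧
    (∀ i, ∑ j, (‖ψ i j‖)^2 = 1) ∧
    (∀ i j, ‖ψ i j‖ ≤ 1 / Real.sqrt m) ∧
    ω = ∑ i, p i • pureState (ψ i)}

/-- N_m: density matrices with all diagonal entries at most 1/m. -/
def Nset (m : ℕ) : Set (Matrix ι ι ℂ) :=
  {ω | IsDensityMatrix ω ∧ ∀ i, (ω i i).re ≤ 1 / m}

/-- Optimal fidelity of assisted distillation F_A(ρ,m) = max_{ω ∈ M_m} F(ρ,ω). -/
def FA (ρ : Matrix ι ι ℂ) (m : ℕ) : ℝ :=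
  sSup {r : ℝ | ∃ ω ∈ Mset (ι := ι) m, r = fidelity ρ ω}


set_option maxHeartbeats 1000000 in
theorem stmt6 {d : ℕ} (y : Fin d → ℝ) (hy : ∀ i, 0 ≤ y i)
    (hy2 : ∑ i, (y i)^2 = 1) (m : ℕ) (hm : 1 ≤ m) (hmd : m ≤ d) :
    IsGreatest {r : ℝ | ∃ z : Fin d → ℝ, (∀ i, 0 ≤ z i) ∧ (∑ i, (z i)^2 = 1) ∧
      (∀ i, z i ≤ 1 / Real.sqrt m) ∧ r = ∑ i, y i * z i}
      ((1 / Real.sqrt m) * distNorm m (fun i => (y i : ℂ))) := by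
  have hm0 : (0:ℝ) < m := by exact_mod_cast Nat.pos_of_ne_zero (by omega)
  set s : ℝ := Real.sqrt (m:ℕ) with hsdef
  have hs0 : 0 < s := Real.sqrt_pos.mpr hm0
  have hs2 : s * s = m := Real.mul_self_sqrt hm0.le
  set F : (Fin d → ℂ) → ℝ := fun x =>
    (∑ i, ‖(y i : ℂ) - x i‖) + s * Real.sqrt (∑ i, (‖x i‖)^2) with hF
  have hdist : distNorm m (fun i => (y i : ℂ)) = ⨅ x, F x := rfl
  have hFnn : ∀ x, 0 ≤ F x := by
    intro x
    apply add_nonneg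
    · exact Finset.sum_nonneg fun i _ => norm_nonneg _
    · positivity
  have hbdd : BddBelow (Set.range F) := ⟨0, by rintro _ ⟨x, rfl⟩; exact hFnn x⟩
  have weak : ∀ z : Fin d → ℝ, (∀ i, 0 ≤ z i) → (∑ i, (z i)^2 = 1) →
      (∀ i, z i ≤ 1 / s) → ∀ x : Fin d → ℂ, s * (∑ i, y i * z i) ≤ F x := by
    intro z hz0 hz2 hzb x
    have hA : ∑ i, (y i - (x i).re) * z i ≤ (∑ i, ‖(y i : ℂ) - x i‖) * (1/s) := by
      rw [Finset.sum_mul]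
      apply Finset.sum_le_sum
      intro i _
      have h2 : y i - (x i).re ≤ ‖(y i : ℂ) - x i‖ := by
        have hre : ((y i:ℂ) - x i).re = y i - (x i).re := by simp
        calc y i - (x i).re = ((y i:ℂ) - x i).re := hre.symm
          _ ≤ |((y i:ℂ) - x i).re| := le_abs_self _
          _ ≤ ‖_‖ := Complex.abs_re_le_norm _
      exact mul_le_mul h2 (hzb i) (hz0 i) (norm_nonneg _)
    have hB : ∑ i, (x i).re * z i ≤ Real.sqrt (∑ i, (‖x i‖)^2) := by
      calc ∑ i, (x i).re * z i
          ≤ Real.sqrt (∑ i, ((x i).re)^2) * Real.sqrt (∑ i, (z i)^2) :=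
            Real.sum_mul_le_sqrt_mul_sqrt _ _ _
        _ = Real.sqrt (∑ i, ((x i).re)^2) := by rw [hz2, Real.sqrt_one, mul_one]
        _ ≤ Real.sqrt (∑ i, (‖x i‖)^2) := by
            apply Real.sqrt_le_sqrt
            apply Finset.sum_le_sum
            intro i _
            have := Complex.sq_norm (x i)
            have := Complex.normSq_apply (x i)
            nlinarith [sq_nonneg (x i).im]
    calc s * (∑ i, y i * z i)
        = s * (∑ i, ((y i - (x i).re) * z i) + ∑ i, (x i).re * z i) := by
          rw [← Finset.sum_add_distrib]
          congr 1
          exact Finset.sum_congr rfl fun i _ => by ring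
      _ ≤ s * ((∑ i, ‖(y i : ℂ) - x i‖) * (1/s)
            + Real.sqrt (∑ i, (‖x i‖)^2)) :=
          mul_le_mul_of_nonneg_left (add_le_add hA hB) hs0.le
      _ = (∑ i, ‖(y i : ℂ) - x i‖)
            + s * Real.sqrt (∑ i, (‖x i‖)^2) := by
          have hsne : s ≠ 0 := ne_of_gt hs0
          field_simp
      _ = F x := rfl
  constructor
  · -- membership
    obtain ⟨z, hz0, hz2, hzb, x, hxF⟩ :
        ∃ z : Fin d → ℝ, (∀ i, 0 ≤ z i) ∧ (∑ i, (z i)^2 = 1) ∧ (∀ i, z i ≤ 1/s) ∧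
          ∃ x : Fin d → ℂ, F x ≤ s * (∑ i, y i * z i) := by
      by_cases hcard : (Finset.univ.filter (fun i => y i ≠ 0)).card ≤ m
      · -- degenerate case: small support
        obtain ⟨T, hsub, hTcard⟩ := Finset.exists_superset_card_eq hcard (by simpa using hmd)
        have hyT : ∀ i, i ∉ T → y i = 0 := by
          intro i hi
          by_contra h
          exact hi (hsub (Finset.mem_filter.mpr ⟨Finset.mem_univ i, h⟩))
        refine ⟨fun i => if i ∈ T then 1/s else 0, ?_, ?_, ?_, 0, ?_⟩
        · intro i; dsimp only; split <;> positivity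
        · have h1 : ∑ i, (if i ∈ T then 1/s else 0)^2 = ∑ i ∈ T, (1/s)^2 := by
            calc ∑ i, (if i ∈ T then 1/s else 0)^2
                = ∑ i, (if i ∈ T then (1/s)^2 else 0) := by
                  apply Finset.sum_congr rfl; intro i _; split <;> simp
              _ = ∑ i ∈ Finset.univ ∩ T, (1/s)^2 := Finset.sum_ite_mem _ _ _
              _ = ∑ i ∈ T, (1/s)^2 := by rw [Finset.univ_inter]
          rw [h1, Finset.sum_const, hTcard, nsmul_eq_mul]
          field_simp
          nlinarith
        · intro i; dsimp only; split
          · exact le_refl _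
          · positivity
        · have hF0 : F 0 = ∑ i, y i := by
            simp only [hF, Pi.zero_apply, sub_zero, map_zero, norm_zero]
            rw [show (∑ i, (0:ℝ)^2) = 0 by simp, Real.sqrt_zero, mul_zero, add_zero]
            apply Finset.sum_congr rfl
            intro i _
            rw [Complex.norm_real, Real.norm_eq_abs, _root_.abs_of_nonneg (hy i)]
          rw [hF0]
          have h2 : s * (∑ i, y i * (if i ∈ T then 1/s else 0)) = ∑ i ∈ T, y i := by
            rw [Finset.mul_sum]
            calc ∑ i, s * (y i * (if i ∈ T then 1/s else 0))
                = ∑ i, (if i ∈ T then y i else 0) := by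
                  apply Finset.sum_congr rfl; intro i _; split
                  · field_simp
                  · simp
              _ = ∑ i ∈ Finset.univ ∩ T, y i := Finset.sum_ite_mem _ _ _
              _ = ∑ i ∈ T, y i := by rw [Finset.univ_inter]
          rw [h2]
          rw [Finset.sum_subset (Finset.subset_univ T) (fun i _ hi => hyT i hi)]
      · -- main case via IVT
        push_neg at hcard
        set Sf := Finset.univ.filter (fun i => y i ≠ 0) with hSf
        have hSne : Sf.Nonempty := Finset.card_pos.mp (by omega)
        obtain ⟨i₀, hi₀, hεeq⟩ := Finset.exists_mem_eq_inf' hSne y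
        set ε := Sf.inf' hSne y with hε
        have hi₀ne : y i₀ ≠ 0 := (Finset.mem_filter.mp hi₀).2
        have hε0 : 0 < ε := by
          rw [hεeq]
          exact lt_of_le_of_ne (hy i₀) (Ne.symm hi₀ne)
        have hyle1 : ∀ i, y i ≤ 1 := by
          intro i
          have h1 : (y i)^2 ≤ 1 := by
            rw [← hy2]
            exact Finset.single_le_sum (fun j _ => sq_nonneg (y j)) (Finset.mem_univ i)
          nlinarith [hy i]
        have hε1 : ε ≤ 1 := by rw [hεeq]; exact hyle1 i₀
        set φ : ℝ → ℝ := fun t => m * t^2 - ∑ i, (min (y i) t)^2 with hφ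
        have hφc : Continuous φ :=
          (continuous_const.mul (continuous_pow 2)).sub
            (continuous_finset_sum _ fun i _ => (continuous_const.min continuous_id).pow 2)
        have hφε : φ ε ≤ 0 := by
          have h1 : (Sf.card : ℝ) * ε^2 ≤ ∑ i, (min (y i) ε)^2 := by
            calc (Sf.card : ℝ) * ε^2 = ∑ _i ∈ Sf, ε^2 := by
                  rw [Finset.sum_const, nsmul_eq_mul]
              _ = ∑ i ∈ Sf, (min (y i) ε)^2 := by
                  apply Finset.sum_congr rfl
                  intro i hi
                  rw [min_eq_right (Finset.inf'_le y hi)]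
              _ ≤ ∑ i, (min (y i) ε)^2 := by
                  apply Finset.sum_le_sum_of_subset_of_nonneg (Finset.subset_univ _)
                  intro i _ _
                  positivity
          have hcr : (m:ℝ) ≤ (Sf.card : ℝ) := by exact_mod_cast hcard.le
          simp only [hφ]
          nlinarith [sq_nonneg ε]
        have hφ1 : 0 ≤ φ 1 := by
          have h1 : ∑ i, (min (y i) 1)^2 ≤ ∑ i, (y i)^2 := by
            apply Finset.sum_le_sum
            intro i _
            have h2 := min_le_left (y i) 1
            have h0 : 0 ≤ min (y i) 1 := le_min (hy i) zero_le_one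
            nlinarith
          rw [hy2] at h1
          have hm1 : (1:ℝ) ≤ m := by exact_mod_cast hm
          simp only [hφ]
          nlinarith
        obtain ⟨t₀, ht₀mem, ht₀⟩ := intermediate_value_Icc hε1 hφc.continuousOn ⟨hφε, hφ1⟩
        have ht0 : 0 < t₀ := lt_of_lt_of_le hε0 ht₀mem.1
        have key : ∑ i, (min (y i) t₀)^2 = m * t₀^2 := by
          have h3 : (m:ℝ) * t₀^2 - ∑ i, (min (y i) t₀)^2 = 0 := ht₀
          linarith
        set g : Fin d → ℝ := fun i => min (y i) t₀ with hg
        have hg0 : ∀ i, 0 ≤ g i := fun i => le_min (hy i) ht0.le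
        have hgy : ∀ i, g i ≤ y i := fun i => min_le_left _ _
        have hgt : ∀ i, g i ≤ t₀ := fun i => min_le_right _ _
        refine ⟨fun i => g i / (s * t₀), ?_, ?_, ?_, (fun i => ((g i : ℝ) : ℂ)), ?_⟩
        · intro i; have := hg0 i; positivity
        · have h4 : ∑ i, (g i / (s * t₀))^2 = (∑ i, (g i)^2) / (s*t₀)^2 := by
            rw [Finset.sum_div]
            apply Finset.sum_congr rfl
            intro i _
            rw [div_pow]
          have h5 : (s*t₀)^2 = m * t₀^2 := by rw [mul_pow, pow_two s, hs2]
          rw [h4, key, h5, div_self (by positivity)]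
        · intro i
          have h6 := hgt i
          rw [div_le_div_iff₀ (by positivity) hs0]
          nlinarith [hs0, ht0]
        · have habs : ∀ i, ‖(y i : ℂ) - ((g i :ℝ):ℂ)‖ = y i - g i := by
            intro i
            rw [← Complex.ofReal_sub, Complex.norm_real, Real.norm_eq_abs, _root_.abs_of_nonneg (by linarith [hgy i] : (0:ℝ) ≤ y i - g i)]
          have hsqrt : Real.sqrt (∑ i, (‖((g i:ℝ):ℂ)‖)^2) = s * t₀ := by
            have h7 : ∑ i, (‖((g i:ℝ):ℂ)‖)^2 = ∑ i, (g i)^2 := by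
              apply Finset.sum_congr rfl
              intro i _
              rw [Complex.norm_real, Real.norm_eq_abs, _root_.sq_abs]
            rw [h7, key, show (m:ℝ) * t₀^2 = (s*t₀)^2 by rw [mul_pow, pow_two s, hs2]]
            exact Real.sqrt_sq (by positivity)
          have hFx : F (fun i => ((g i:ℝ):ℂ)) = (∑ i, (y i - g i)) + s * (s * t₀) := by
            simp only [hF]
            rw [hsqrt]
            congr 1
            exact Finset.sum_congr rfl fun i _ => habs i
          have hrhs : s * (∑ i, y i * (g i / (s * t₀))) = (∑ i, y i * g i) / t₀ := by
            rw [Finset.mul_sum, Finset.sum_div]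
            apply Finset.sum_congr rfl
            intro i _
            field_simp
          have hkey2 : ∑ i, (y i - g i) * t₀ = ∑ i, (y i * g i - (g i)^2) := by
            apply Finset.sum_congr rfl
            intro i _
            rcases le_total (y i) t₀ with h | h
            · rw [show g i = y i from min_eq_left h]; ring
            · rw [show g i = t₀ from min_eq_right h]; ring
          have hA : ∑ i, (y i - g i) * t₀ = (∑ i, (y i - g i)) * t₀ := (Finset.sum_mul _ _ _).symm
          have hB : ∑ i, (y i * g i - (g i)^2) = (∑ i, y i * g i) - ∑ i, (g i)^2 :=
            Finset.sum_sub_distrib _ _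
          rw [hFx, hrhs, le_div_iff₀ ht0]
          nlinarith [key, hkey2, hA, hB, hs2]
    have hle : (⨅ x, F x) ≤ s * ∑ i, y i * z i := le_trans (ciInf_le hbdd x) hxF
    have hge : s * (∑ i, y i * z i) ≤ ⨅ x, F x := le_ciInf (weak z hz0 hz2 hzb)
    refine ⟨z, hz0, hz2, hzb, ?_⟩
    rw [hdist, ← le_antisymm hge hle]
    field_simp
  · rintro r ⟨z, hz0, hz2, hzb, rfl⟩
    have h := le_ciInf (weak z hz0 hz2 hzb)
    rw [hdist]
    calc ∑ i, y i * z i = (1/s) * (s * ∑ i, y i * z i) := by field_simp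
      _ ≤ (1/s) * ⨅ x, F x := mul_le_mul_of_nonneg_left h (by positivity)

end
end

section
/- For any d ≥ 4 there exists a density matrix ω with all diagonal entries equal to 1/d which cannot be written as any convex combination of pure states |φ⟩⟨φ| with ‖φ‖_∞² ≤ 1/d; i.e., M_d ⊊ N_d for d ≥ 4. -/
open Matrix BigOperators Complex ComplexOrder

noncomputable section

variable {ι : Type*} [Fintype ι] [DecidableEq ι]

set_option linter.unusedSectionVars false

namespace Stmt10Aux

/-- quadratic functional -/
def L (w : ι → ℂ) (M : Matrix ι ι ℂ) : ℂ :=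
  ∑ i, ∑ j, (starRingEnd ℂ) (w i) * M i j * w j

lemma L_pure (w ψ : ι → ℂ) :
    L w (pureState ψ) =
      (starRingEnd ℂ) (∑ j, (starRingEnd ℂ) (ψ j) * w j) * (∑ j, (starRingEnd ℂ) (ψ j) * w j) := by
  rw [map_sum, Finset.sum_mul_sum]
  unfold L pureState
  refine Finset.sum_congr rfl fun i _ => Finset.sum_congr rfl fun j _ => ?_
  simp only [Matrix.of_apply, _root_.map_mul, RingHom.id_apply, starRingEnd_self_apply]
  ring

lemma L_quad (w : ι → ℂ) (M : Matrix ι ι ℂ) :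
    dotProduct (star w) (M *ᵥ w) = L w M := by
  unfold L dotProduct Matrix.mulVec
  refine Finset.sum_congr rfl fun i _ => ?_
  simp [dotProduct, Finset.mul_sum, mul_assoc]

lemma L_nonneg_pure (w ψ : ι → ℂ) : 0 ≤ L w (pureState ψ) := by
  rw [L_pure]; exact star_mul_self_nonneg _

lemma pureState_posSemidef (ψ : ι → ℂ) : (pureState ψ).PosSemidef := by
  rw [Matrix.posSemidef_iff_dotProduct_mulVec]
  constructor
  · ext i j
    simp only [pureState, Matrix.conjTranspose_apply, Matrix.of_apply, star_mul',
      RCLike.star_def, starRingEnd_self_apply]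
    ring
  · intro x
    rw [L_quad]
    exact L_nonneg_pure x ψ

lemma L_sum {n : ℕ} (w : ι → ℂ) (M : Fin n → Matrix ι ι ℂ) :
    L w (∑ k, M k) = ∑ k, L w (M k) := by
  unfold L
  simp only [Matrix.sum_apply, Finset.mul_sum, Finset.sum_mul]
  trans ∑ i, ∑ k, ∑ j, (starRingEnd ℂ) (w i) * M k i j * w j
  · exact Finset.sum_congr rfl fun i _ => Finset.sum_comm
  · exact Finset.sum_comm

lemma L_smul_real (w : ι → ℂ) (r : ℝ) (M : Matrix ι ι ℂ) :
    L w (r • M) = (r : ℂ) * L w M := by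
  unfold L
  simp only [Matrix.smul_apply, Finset.mul_sum]
  refine Finset.sum_congr rfl fun i _ => Finset.sum_congr rfl fun j _ => ?_
  simp [Complex.real_smul]; ring

lemma L_smul_c (w : ι → ℂ) (c : ℂ) (M : Matrix ι ι ℂ) :
    L w (c • M) = c * L w M := by
  unfold L
  simp only [Matrix.smul_apply, Finset.mul_sum, smul_eq_mul]
  refine Finset.sum_congr rfl fun i _ => Finset.sum_congr rfl fun j _ => ?_
  ring

lemma L_add (w : ι → ℂ) (M N : Matrix ι ι ℂ) : L w (M + N) = L w M + L w N := by
  unfold L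
  simp [Finset.sum_add_distrib, mul_add, add_mul]

lemma L_diagonal (w : ι → ℂ) (g : ι → ℂ) :
    L w (Matrix.diagonal g) = ∑ i, (starRingEnd ℂ) (w i) * g i * w i := by
  unfold L
  refine Finset.sum_congr rfl fun i _ => ?_
  rw [Finset.sum_eq_single i]
  · simp
  · intro j _ hj; simp [Matrix.diagonal_apply_ne' _ hj]
  · simp

end Stmt10Aux

section four
set_option linter.unusedSectionVars false in

lemma sum_four {M : Type*} [AddCommMonoid M] {d : ℕ} (hd : 4 ≤ d) (g : Fin d → M)
    (hg : ∀ i : Fin d, 4 ≤ i.val → g i = 0) :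
    ∑ i, g i = g ⟨0, by omega⟩ + g ⟨1, by omega⟩ + g ⟨2, by omega⟩ + g ⟨3, by omega⟩ := by
  classical
  have h0 : (⟨0, by omega⟩ : Fin d) ≠ ⟨1, by omega⟩ := by simp [Fin.ext_iff]
  rw [← Finset.sum_subset (Finset.subset_univ
      ({⟨0, by omega⟩, ⟨1, by omega⟩, ⟨2, by omega⟩, ⟨3, by omega⟩} : Finset (Fin d)))
      (fun x _ hx => hg x (by
        by_contra h
        push_neg at h
        apply hx
        simp only [Finset.mem_insert, Finset.mem_singleton, Fin.ext_iff]
        omega))]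
  rw [Finset.sum_insert (by simp [Fin.ext_iff]), Finset.sum_insert (by simp [Fin.ext_iff]),
    Finset.sum_insert (by simp [Fin.ext_iff]), Finset.sum_singleton, add_assoc, add_assoc]

end four

namespace Witness

def s : ℝ := Real.sqrt 2⁻¹

lemma s_sq_real : s * s = 2⁻¹ := Real.mul_self_sqrt (by norm_num)

lemma s_sq : (s : ℂ) * (s : ℂ) = 2⁻¹ := by
  rw [← Complex.ofReal_mul, s_sq_real]
  norm_num

def Af : ℕ → ℂ := fun n => if n = 0 then 1 else if n = 2 then (s:ℂ) else if n = 3 then (s:ℂ) else 0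
def Bf : ℕ → ℂ := fun n =>
  if n = 1 then 1 else if n = 2 then (s:ℂ) else if n = 3 then -Complex.I * s else 0
def w1f : ℕ → ℂ := fun n => if n = 0 then (s:ℂ) else if n = 1 then (s:ℂ) else if n = 2 then -1 else 0
def w2f : ℕ → ℂ := fun n =>
  if n = 0 then (s:ℂ) else if n = 1 then Complex.I * s else if n = 3 then -1 else 0

lemma Af_big {n : ℕ} (h : 4 ≤ n) : Af n = 0 := by unfold Af; split_ifs <;> first | omega | rfl
lemma Bf_big {n : ℕ} (h : 4 ≤ n) : Bf n = 0 := by unfold Bf; split_ifs <;> first | omega | rfl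
lemma w1f_big {n : ℕ} (h : 4 ≤ n) : w1f n = 0 := by unfold w1f; split_ifs <;> first | omega | rfl
lemma w2f_big {n : ℕ} (h : 4 ≤ n) : w2f n = 0 := by unfold w2f; split_ifs <;> first | omega | rfl

/-- the witness matrix -/
def W (d : ℕ) : Matrix (Fin d) (Fin d) ℂ :=
  ((d : ℂ))⁻¹ • (pureState (fun i => Af i.val) + pureState (fun i => Bf i.val) +
    Matrix.diagonal (fun i : Fin d => if 4 ≤ i.val then 1 else 0))

end Witness

namespace Witness

lemma conj_s : (starRingEnd ℂ) (s : ℂ) = (s : ℂ) := Complex.conj_ofReal s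

lemma diag_entry (n : ℕ) :
    Af n * (starRingEnd ℂ) (Af n) + Bf n * (starRingEnd ℂ) (Bf n) +
      (if 4 ≤ n then (1:ℂ) else 0) = 1 := by
  match n with
  | 0 => simp [Af, Bf]
  | 1 => simp [Af, Bf]
  | 2 => simp [Af, Bf, conj_s, s_sq]; norm_num
  | 3 =>
      simp only [Af, Bf]
      norm_num [Complex.conj_I, conj_s, _root_.map_mul, map_neg]
      ring_nf
      rw [Complex.I_sq]
      have := s_sq
      ring_nf at this ⊢
      rw [this]; norm_num
  | (m+4) =>
      rw [Af_big (by omega), Bf_big (by omega), if_pos (by omega)]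
      simp

lemma trace_A {d : ℕ} (hd : 4 ≤ d) :
    ∑ i : Fin d, Af i.val * (starRingEnd ℂ) (Af i.val) = 2 := by
  rw [sum_four hd _ (fun i hi => by rw [Af_big hi]; simp)]
  simp [Af, conj_s, s_sq]
  norm_num [s_sq]

lemma trace_B {d : ℕ} (hd : 4 ≤ d) :
    ∑ i : Fin d, Bf i.val * (starRingEnd ℂ) (Bf i.val) = 2 := by
  rw [sum_four hd _ (fun i hi => by rw [Bf_big hi]; simp)]
  simp only [Bf]
  norm_num [Complex.conj_I, conj_s, _root_.map_mul, map_neg]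
  ring_nf
  rw [Complex.I_sq]
  have := s_sq
  ring_nf at this ⊢
  rw [this]; norm_num

lemma trace_diag {d : ℕ} (hd : 4 ≤ d) :
    ∑ i : Fin d, (if 4 ≤ i.val then (1:ℂ) else 0) = (d : ℂ) - 4 := by
  have key : ∀ i : Fin d, (if 4 ≤ i.val then (1:ℂ) else 0) = 1 - (if i.val < 4 then 1 else 0) := by
    intro i; split_ifs with h1 h2 <;> first | omega | norm_num
  simp_rw [key]
  rw [Finset.sum_sub_distrib]
  rw [sum_four hd (fun i : Fin d => if i.val < 4 then (1:ℂ) else 0)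
    (fun i hi => by show (if i.val < 4 then (1:ℂ) else 0) = 0; rw [if_neg (by omega)])]
  simp [Finset.card_univ]
  norm_num

-- u-values against w1 and w2
lemma uA1 {d : ℕ} (hd : 4 ≤ d) :
    ∑ j : Fin d, (starRingEnd ℂ) (Af j.val) * w1f j.val = 0 := by
  rw [sum_four hd _ (fun i hi => by rw [Af_big hi]; simp)]
  simp [Af, w1f, conj_s]

lemma uB1 {d : ℕ} (hd : 4 ≤ d) :
    ∑ j : Fin d, (starRingEnd ℂ) (Bf j.val) * w1f j.val = 0 := by
  rw [sum_four hd _ (fun i hi => by rw [Bf_big hi]; simp)]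
  simp [Bf, w1f, conj_s]

lemma uA2 {d : ℕ} (hd : 4 ≤ d) :
    ∑ j : Fin d, (starRingEnd ℂ) (Af j.val) * w2f j.val = 0 := by
  rw [sum_four hd _ (fun i hi => by rw [Af_big hi]; simp)]
  simp [Af, w2f, conj_s]

lemma uB2 {d : ℕ} (hd : 4 ≤ d) :
    ∑ j : Fin d, (starRingEnd ℂ) (Bf j.val) * w2f j.val = 0 := by
  rw [sum_four hd _ (fun i hi => by rw [Bf_big hi]; simp)]
  simp [Bf, w2f, conj_s, Complex.conj_I]

lemma Ldiag_w (wf : ℕ → ℂ) (hw : ∀ n, 4 ≤ n → wf n = 0) {d : ℕ} :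
    ∑ i : Fin d, (starRingEnd ℂ) (wf i.val) * (if 4 ≤ i.val then (1:ℂ) else 0) * wf i.val = 0 := by
  refine Finset.sum_eq_zero fun i _ => ?_
  by_cases h : 4 ≤ i.val
  · rw [hw _ h]; simp
  · rw [if_neg h]; simp

end Witness

namespace Stmt10Aux

lemma posSemidef_smul_c {M : Matrix ι ι ℂ} (h : M.PosSemidef) {c : ℂ} (hc : 0 ≤ c) :
    (c • M).PosSemidef := by
  rw [Matrix.posSemidef_iff_dotProduct_mulVec]
  constructor
  · rw [Matrix.IsHermitian, Matrix.conjTranspose_smul, h.1, (IsSelfAdjoint.of_nonneg hc : star c = c)]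
  · intro x
    rw [smul_mulVec, dotProduct_smul, smul_eq_mul]
    exact mul_nonneg hc (h.dotProduct_mulVec_nonneg x)

lemma posSemidef_sum {n : ℕ} (M : Fin n → Matrix ι ι ℂ) (h : ∀ k, (M k).PosSemidef) :
    (∑ k, M k).PosSemidef :=
  Finset.sum_induction M _ (fun _ _ ha hb => ha.add hb) Matrix.PosSemidef.zero (fun k _ => h k)

lemma trace_pureState (ψ : ι → ℂ) :
    (pureState ψ).trace = ∑ i, ψ i * (starRingEnd ℂ) (ψ i) := by
  unfold Matrix.trace pureState Matrix.diag
  simp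

end Stmt10Aux


open Stmt10Aux Witness in
theorem stmt10 (d : ℕ) (hd : 4 ≤ d) :
    (∃ ω : Matrix (Fin d) (Fin d) ℂ, IsDensityMatrix ω ∧ (∀ i, ω i i = (d : ℂ)⁻¹) ∧
      ω ∉ Mset (ι := Fin d) d) ∧
    Mset (ι := Fin d) d ⊂ Nset d := by
  have hd0 : (0:ℝ) < (d:ℝ) := by exact_mod_cast (by omega : 0 < d)
  have hdC : ((d:ℂ)) ≠ 0 := by exact_mod_cast (by omega : d ≠ 0)
  have hinv_eq : ((d:ℂ))⁻¹ = (((1/(d:ℝ)) : ℝ) : ℂ) := by push_cast; ring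
  have hinv_nonneg : (0:ℂ) ≤ (d:ℂ)⁻¹ := by
    rw [hinv_eq, Complex.zero_le_real]
    positivity
  -- diagonal entries of the witness
  have hdiag : ∀ i : Fin d, (W d) i i = (d:ℂ)⁻¹ := by
    intro i
    simp only [W, Matrix.smul_apply, Matrix.add_apply, Matrix.diagonal_apply_eq,
      pureState, Matrix.of_apply]
    rw [diag_entry i.val, smul_eq_mul, mul_one]
  -- PSD
  have hpsd : (W d).PosSemidef := by
    refine posSemidef_smul_c ?_ hinv_nonneg
    refine ((pureState_posSemidef _).add (pureState_posSemidef _)).add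
      (Matrix.PosSemidef.diagonal fun i => ?_)
    dsimp only
    split_ifs
    · exact zero_le_one
    · exact le_refl 0
  -- trace
  have htrace : (W d).trace = 1 := by
    simp only [W, Matrix.trace_smul, Matrix.trace_add, Matrix.trace_diagonal]
    rw [trace_pureState, trace_pureState, trace_A hd, trace_B hd, trace_diag hd]
    rw [show (2 + 2 + ((d:ℂ) - 4)) = (d:ℂ) by ring, smul_eq_mul, inv_mul_cancel₀ hdC]
  -- squared-modulus bound
  have hb2 : ∀ (n : ℕ) (ψ : Fin n → Fin d → ℂ),
      (∀ i j, ‖ψ i j‖ ≤ 1 / Real.sqrt d) →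
      ∀ m j, Complex.normSq (ψ m j) ≤ 1/(d:ℝ) := by
    intro n ψ hbound m j
    rw [← Complex.sq_norm]
    calc (‖ψ m j‖)^2 ≤ (1/Real.sqrt d)^2 :=
          pow_le_pow_left₀ (norm_nonneg _) (hbound m j) 2
      _ = 1/(d:ℝ) := by rw [div_pow, one_pow, Real.sq_sqrt hd0.le]
  -- not in Mset
  have hnotM : W d ∉ Mset (ι := Fin d) d := by
    rintro ⟨n, p, ψ, hp0, hp1, hnorm, hbound, hsum⟩
    obtain ⟨k, hk⟩ : ∃ k, p k ≠ 0 := by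
      by_contra h; push_neg at h
      rw [Finset.sum_congr rfl (fun k _ => h k)] at hp1
      simp at hp1
    have hmod : ∀ j, Complex.normSq (ψ k j) = 1/(d:ℝ) := by
      intro j
      have hz : ∑ j : Fin d, (1/(d:ℝ) - (‖ψ k j‖)^2) = 0 := by
        rw [Finset.sum_sub_distrib, hnorm k]
        simp [Finset.card_univ]
        field_simp
        norm_num
      have hj := (Finset.sum_eq_zero_iff_of_nonneg
        (fun j _ => sub_nonneg.mpr (by
          have := hb2 n ψ hbound k j
          rwa [← Complex.sq_norm] at this))).mp hz j (Finset.mem_univ j)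
      have h2 : (‖ψ k j‖)^2 = 1/(d:ℝ) := by linarith
      rw [← h2, Complex.sq_norm]
    -- vanishing of kernel pairings
    have key : ∀ (wf : ℕ → ℂ), (∀ n, 4 ≤ n → wf n = 0) →
        (∑ j : Fin d, (starRingEnd ℂ) (Af j.val) * wf j.val = 0) →
        (∑ j : Fin d, (starRingEnd ℂ) (Bf j.val) * wf j.val = 0) →
        ∑ j : Fin d, (starRingEnd ℂ) (ψ k j) * wf j.val = 0 := by
      intro wf hwbig hA0 hB0
      have hL0 : L (fun i : Fin d => wf i.val) (W d) = 0 := by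
        simp only [W]
        rw [L_smul_c, L_add, L_add, L_pure, L_pure, L_diagonal]
        rw [show (∑ j : Fin d, (starRingEnd ℂ) ((fun i : Fin d => Af i.val) j) *
              (fun i : Fin d => wf i.val) j) = 0 from hA0,
            show (∑ j : Fin d, (starRingEnd ℂ) ((fun i : Fin d => Bf i.val) j) *
              (fun i : Fin d => wf i.val) j) = 0 from hB0]
        rw [show (∑ i : Fin d, (starRingEnd ℂ) ((fun i : Fin d => wf i.val) i) *
              (if 4 ≤ i.val then (1:ℂ) else 0) * (fun i : Fin d => wf i.val) i) = 0 from
          Ldiag_w wf hwbig]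
        simp
      have hLsum : L (fun i : Fin d => wf i.val) (W d) =
          ∑ m, ((p m : ℝ) : ℂ) * L (fun i : Fin d => wf i.val) (pureState (ψ m)) := by
        rw [hsum, L_sum]
        exact Finset.sum_congr rfl fun m _ => L_smul_real _ (p m) _
      have hre : ∑ m, p m * Complex.normSq
          (∑ j, (starRingEnd ℂ) (ψ m j) * (fun i : Fin d => wf i.val) j) = 0 := by
        have h0 := hLsum.symm.trans hL0
        have h1 : ∀ m, ((p m : ℝ) : ℂ) * L (fun i : Fin d => wf i.val) (pureState (ψ m)) =
            ((p m * Complex.normSq (∑ j, (starRingEnd ℂ) (ψ m j) *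
              (fun i : Fin d => wf i.val) j) : ℝ) : ℂ) := by
          intro m
          rw [L_pure, mul_comm ((starRingEnd ℂ) _), Complex.mul_conj]
          push_cast
          ring
        rw [Finset.sum_congr rfl (fun m _ => h1 m), ← Complex.ofReal_sum] at h0
        exact_mod_cast h0
      have hterm := (Finset.sum_eq_zero_iff_of_nonneg
        (fun m _ => mul_nonneg (hp0 m) (Complex.normSq_nonneg _))).mp hre k (Finset.mem_univ k)
      rcases mul_eq_zero.mp hterm with h | h
      · exact absurd h hk
      · exact Complex.normSq_eq_zero.mp h
    have h1 := key w1f (fun n h => w1f_big h) (uA1 hd) (uB1 hd)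
    have h2 := key w2f (fun n h => w2f_big h) (uA2 hd) (uB2 hd)
    rw [sum_four hd _ (fun j hj => by
      show (starRingEnd ℂ) (ψ k j) * w1f j.val = 0
      rw [w1f_big hj, mul_zero])] at h1
    rw [sum_four hd _ (fun j hj => by
      show (starRingEnd ℂ) (ψ k j) * w2f j.val = 0
      rw [w2f_big hj, mul_zero])] at h2
    simp only [w1f, w2f] at h1 h2
    norm_num at h1 h2
    set x := (starRingEnd ℂ) (ψ k ⟨0, by omega⟩) with hx
    set y := (starRingEnd ℂ) (ψ k ⟨1, by omega⟩) with hy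
    set z2 := (starRingEnd ℂ) (ψ k ⟨2, by omega⟩) with hz2
    set z3 := (starRingEnd ℂ) (ψ k ⟨3, by omega⟩) with hz3
    have e2 : z2 = (s:ℂ) * (x + y) := by linear_combination -h1
    have e3 : z3 = (s:ℂ) * (x + Complex.I * y) := by linear_combination -h2
    have nx : Complex.normSq x = 1/(d:ℝ) := by rw [hx, Complex.normSq_conj]; exact hmod _
    have ny : Complex.normSq y = 1/(d:ℝ) := by rw [hy, Complex.normSq_conj]; exact hmod _
    have n2 : Complex.normSq z2 = 1/(d:ℝ) := by rw [hz2, Complex.normSq_conj]; exact hmod _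
    have n3 : Complex.normSq z3 = 1/(d:ℝ) := by rw [hz3, Complex.normSq_conj]; exact hmod _
    have hdd : (2:ℝ)/(d:ℝ) = 1/(d:ℝ) + 1/(d:ℝ) := by ring
    have m2 : Complex.normSq (x + y) = 2/(d:ℝ) := by
      rw [e2, Complex.normSq_mul, Complex.normSq_ofReal, s_sq_real] at n2
      rw [show (2:ℝ)/(d:ℝ) = 2 * (1/(d:ℝ)) by ring, ← n2]; ring
    have m3 : Complex.normSq (x + Complex.I * y) = 2/(d:ℝ) := by
      rw [e3, Complex.normSq_mul, Complex.normSq_ofReal, s_sq_real] at n3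
      rw [show (2:ℝ)/(d:ℝ) = 2 * (1/(d:ℝ)) by ring, ← n3]; ring
    have r1 : (x * (starRingEnd ℂ) y).re = 0 := by
      have h := Complex.normSq_add x y
      rw [m2, nx, ny] at h
      linarith [hdd]
    have r2 : (x * (starRingEnd ℂ) y).im = 0 := by
      have h := Complex.normSq_add x (Complex.I * y)
      rw [m3, nx, Complex.normSq_mul, Complex.normSq_I, one_mul, ny] at h
      have hc : x * (starRingEnd ℂ) (Complex.I * y) = -Complex.I * (x * (starRingEnd ℂ) y) := by
        rw [_root_.map_mul, Complex.conj_I]; ring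
      rw [hc] at h
      have : (-Complex.I * (x * (starRingEnd ℂ) y)).re = (x * (starRingEnd ℂ) y).im := by
        simp [Complex.mul_re]
      rw [this] at h
      linarith [hdd]
    have hz0 : x * (starRingEnd ℂ) y = 0 := by
      rw [Complex.ext_iff]
      refine ⟨by rw [r1]; simp, by rw [r2]; simp⟩
    have hpos : (0:ℝ) < 1/(d:ℝ) := by positivity
    rcases mul_eq_zero.mp hz0 with h | h
    · rw [h, Complex.normSq_zero] at nx; linarith
    · have hy0 : y = 0 := by rw [← Complex.conj_conj y, h, map_zero]
      rw [hy0, Complex.normSq_zero] at ny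
      linarith
  -- Mset ⊆ Nset
  have hsub : Mset (ι := Fin d) d ⊆ Nset d := by
    rintro M ⟨n, p, ψ, hp0, hp1, hnorm, hbound, rfl⟩
    have hconv : (∑ i, p i • pureState (ψ i)) = ∑ i, ((p i : ℝ) : ℂ) • pureState (ψ i) := by
      refine Finset.sum_congr rfl fun i _ => ?_
      ext a b
      simp [Matrix.smul_apply, Complex.real_smul]
    refine ⟨⟨?_, ?_⟩, ?_⟩
    · rw [hconv]
      exact posSemidef_sum _ (fun m => posSemidef_smul_c (pureState_posSemidef _)
        (Complex.zero_le_real.mpr (hp0 m)))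
    · rw [hconv, Matrix.trace_sum]
      have ht : ∀ m, (((p m : ℝ) : ℂ) • pureState (ψ m)).trace = ((p m : ℝ) : ℂ) := by
        intro m
        rw [Matrix.trace_smul, trace_pureState, smul_eq_mul]
        have h1 : ∑ j, ψ m j * (starRingEnd ℂ) (ψ m j) = 1 := by
          have : ∑ j, ψ m j * (starRingEnd ℂ) (ψ m j) =
              ((∑ j, (‖ψ m j‖)^2 : ℝ) : ℂ) := by
            rw [Complex.ofReal_sum]
            refine Finset.sum_congr rfl fun j _ => ?_
            rw [Complex.mul_conj, Complex.sq_norm]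
          rw [this, hnorm m]; norm_num
        rw [h1, mul_one]
      rw [Finset.sum_congr rfl (fun m _ => ht m), ← Complex.ofReal_sum, hp1]; norm_num
    · intro i
      have hentry : ((∑ m, p m • pureState (ψ m)) i i).re =
          ∑ m, p m * Complex.normSq (ψ m i) := by
        rw [hconv]
        rw [show (∑ m, ((p m : ℝ) : ℂ) • pureState (ψ m)) i i
            = ∑ m, ((p m : ℝ) : ℂ) * (ψ m i * (starRingEnd ℂ) (ψ m i)) from by
          simp [Matrix.sum_apply, Matrix.smul_apply, pureState]]
        rw [Complex.re_sum]
        refine Finset.sum_congr rfl fun m _ => ?_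
        rw [Complex.mul_conj, ← Complex.ofReal_mul]
        simp
      rw [hentry]
      calc ∑ m, p m * Complex.normSq (ψ m i)
          ≤ ∑ m, p m * (1/(d:ℝ)) :=
            Finset.sum_le_sum (fun m _ =>
              mul_le_mul_of_nonneg_left (hb2 n ψ hbound m i) (hp0 m))
        _ = 1/(d:ℝ) := by rw [← Finset.sum_mul, hp1, one_mul]
  have hWN : W d ∈ Nset (ι := Fin d) d := by
    refine ⟨⟨hpsd, htrace⟩, fun i => ?_⟩
    rw [hdiag i, hinv_eq]
    simp
  exact ⟨⟨W d, ⟨hpsd, htrace⟩, hdiag, hnotM⟩,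
    (Set.ssubset_iff_of_subset hsub).mpr ⟨W d, hWN, hnotM⟩⟩


end
end
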